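/- arXiv:1308.6811 — 3 statements merged into one kernel-verified Lean document; each statement's English description precedes it below -/
import Mathlib

section
/- Let R be a ring and F a chain complex of right R-modules with F_a and F_{a-1} flat. For a left R-module N, let φ_a : Z_a(F) ⊗_R N → Z_a(F ⊗_R N) be the natural map sending z ⊗ x to z ⊗ x, where Z_a denotes the module of a-cycles. Then there is an exact sequence 0 → Tor_1^R(B_{a-1}(F), N) → Z_a(F) ⊗_R N → Z_a(F ⊗_R N) → Tor_1^R(C_{a-1}(F), N) → 0, where B_{a-1}(F) = Im(∂_a) and C_{a-1}(F) = Coker(∂_a). -/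
open CategoryTheory TensorProduct

variable {R : Type} [CommRing R]
variable {Fa Fb N : Type} [AddCommGroup Fa] [Module R Fa] [AddCommGroup Fb] [Module R Fb]
  [AddCommGroup N] [Module R N]

/-- The natural map `Z_a(F) ⊗ N → Z_a(F ⊗ N)`, `z ⊗ x ↦ z ⊗ x`, where `Z_a(F) = ker ∂_a`
and `Z_a(F ⊗ N) = ker (∂_a ⊗ N)`; here `∂_a` is the differential `f : F_a → F_{a-1}`. -/
noncomputable def cycleComparison (f : Fa →ₗ[R] Fb) (N : Type) [AddCommGroup N] [Module R N] :
    (↥(LinearMap.ker f) ⊗[R] N) →ₗ[R] ↥(LinearMap.ker (f.rTensor N)) :=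
  LinearMap.codRestrict _ (((LinearMap.ker f).subtype).rTensor N) (fun z => by
    simp only [LinearMap.mem_ker]
    have h : (f.rTensor N).comp (((LinearMap.ker f).subtype).rTensor N) = 0 := by
      rw [← LinearMap.rTensor_comp]
      have h0 : f.comp (LinearMap.ker f).subtype = 0 := by
        ext x; exact x.2
      rw [h0, LinearMap.rTensor_zero]
    exact DFunLike.congr_fun h z)


section AuxLemmas
open Function LinearMap

/-- Computation of the first homology of `X ⊗ P` in terms of a one-step truncation. -/
theorem homology_ker {P₂ P₁ P₀ K X : Type}
    [AddCommGroup P₂] [Module R P₂] [AddCommGroup P₁] [Module R P₁]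
    [AddCommGroup P₀] [Module R P₀] [AddCommGroup K] [Module R K]
    [AddCommGroup X] [Module R X]
    (π' : P₁ →ₗ[R] K) (j : K →ₗ[R] P₀) (d₂ : P₂ →ₗ[R] P₁)
    (hπ' : Function.Surjective π') (hj : Function.Injective j)
    (hex : Function.Exact d₂ (j ∘ₗ π'))
    (c : (X ⊗[R] P₂) →ₗ[R] ↥(LinearMap.ker ((j ∘ₗ π').lTensor X)))
    (hc : ∀ x, ((c x : X ⊗[R] P₁)) = d₂.lTensor X x) :
    Nonempty ((↥(LinearMap.ker ((j ∘ₗ π').lTensor X)) ⧸ LinearMap.range c) ≃ₗ[R]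
      ↥(LinearMap.ker (j.lTensor X))) := by
  have hd : Function.Exact d₂ π' := by
    intro y
    rw [← hex y]
    constructor
    · intro h; rw [LinearMap.comp_apply, h, map_zero]
    · intro h; exact hj (by rw [← LinearMap.comp_apply, h, map_zero])
  have hcomp : (j ∘ₗ π').lTensor X = (j.lTensor X) ∘ₗ (π'.lTensor X) :=
    LinearMap.lTensor_comp X j π'
  have hmem : ∀ v : ↥(LinearMap.ker ((j ∘ₗ π').lTensor X)),
      (π'.lTensor X) v.1 ∈ LinearMap.ker (j.lTensor X) := by
    rintro ⟨v, hv⟩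
    simp only [LinearMap.mem_ker]
    rw [LinearMap.mem_ker, hcomp, LinearMap.comp_apply] at hv
    exact hv
  set ψ : ↥(LinearMap.ker ((j ∘ₗ π').lTensor X)) →ₗ[R] ↥(LinearMap.ker (j.lTensor X)) :=
    LinearMap.codRestrict _ ((π'.lTensor X) ∘ₗ (LinearMap.ker ((j ∘ₗ π').lTensor X)).subtype)
      hmem with hψdef
  have hψsurj : Function.Surjective ψ := by
    rintro ⟨y, hy⟩
    obtain ⟨w, hw⟩ := LinearMap.lTensor_surjective X (g := π') hπ' y
    have hwk : w ∈ LinearMap.ker ((j ∘ₗ π').lTensor X) := by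
      rw [LinearMap.mem_ker, hcomp, LinearMap.comp_apply, hw]
      exact hy
    exact ⟨⟨w, hwk⟩, Subtype.ext hw⟩
  have hker : LinearMap.range c = LinearMap.ker ψ := by
    ext v
    constructor
    · rintro ⟨x, rfl⟩
      apply Subtype.ext
      show (π'.lTensor X) ((c x : X ⊗[R] P₁)) = 0
      rw [hc x, ← LinearMap.comp_apply, ← LinearMap.lTensor_comp]
      have : π' ∘ₗ d₂ = 0 := by
        ext z
        exact hd.apply_apply_eq_zero z
      rw [this, LinearMap.lTensor_zero]
      rfl
    · intro hv
      have h' : (π'.lTensor X) v.1 = 0 := congrArg Subtype.val hv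
      obtain ⟨x, hx⟩ := (lTensor_exact X hd hπ' _).mp h'
      exact ⟨x, Subtype.ext (by rw [hc x, hx])⟩
  exact ⟨(Submodule.quotEquivOfEq _ _ hker).trans (ψ.quotKerEquivOfSurjective hψsurj)⟩


/-- Balancing for `Tor₁`: given short exact sequences `0 → Z → A → B → 0` with `A` flat
and `0 → K → P → N' → 0` with `P` flat, there is an isomorphism
`ker (B ⊗ K → B ⊗ P) ≃ ker (Z ⊗ N' → A ⊗ N')`. -/
theorem balancing
    {Z A B K P N' : Type}
    [AddCommGroup Z] [Module R Z] [AddCommGroup A] [Module R A] [AddCommGroup B] [Module R B]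
    [AddCommGroup K] [Module R K] [AddCommGroup P] [Module R P] [AddCommGroup N'] [Module R N']
    [Module.Flat R A] [Module.Flat R P]
    (i : Z →ₗ[R] A) (p : A →ₗ[R] B) (j : K →ₗ[R] P) (q : P →ₗ[R] N')
    (hi : Function.Injective i) (hp : Function.Surjective p) (hip : Function.Exact i p)
    (hj : Function.Injective j) (hq : Function.Surjective q) (hjq : Function.Exact j q) :
    Nonempty ((↥(ker (j.lTensor B))) ≃ₗ[R] ↥(ker (i.rTensor N'))) := by
  -- notation
  set ι : Z ⊗[R] P →ₗ[R] A ⊗[R] P := i.rTensor P with hιdef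
  have hι : Function.Injective ι := Module.Flat.rTensor_preserves_injective_linearMap i hi
  set jA : A ⊗[R] K →ₗ[R] A ⊗[R] P := j.lTensor A with hjAdef
  have hjA : Function.Injective jA := Module.Flat.lTensor_preserves_injective_linearMap j hj
  -- the submodule V
  set V : Submodule R (A ⊗[R] K) := Submodule.comap jA (range ι) with hVdef
  -- commutation lemmas
  have comm1 : (j.lTensor B).comp (p.rTensor K) = (p.rTensor P).comp (j.lTensor A) := by
    rw [LinearMap.lTensor_comp_rTensor, LinearMap.rTensor_comp_lTensor]
  have comm2 : (i.rTensor N').comp (q.lTensor Z) = (q.lTensor A).comp (i.rTensor P) := by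
    rw [LinearMap.rTensor_comp_lTensor, LinearMap.lTensor_comp_rTensor]
  have comm3 : (j.lTensor A).comp (i.rTensor K) = (i.rTensor P).comp (j.lTensor Z) := by
    rw [LinearMap.lTensor_comp_rTensor, LinearMap.rTensor_comp_lTensor]
  have hpi : p.comp i = 0 := by ext z; exact (hip.apply_apply_eq_zero z)
  have hqj : q.comp j = 0 := by ext k; exact (hjq.apply_apply_eq_zero k)
  -- ρ : V → ker (j.lTensor B)
  have hρmem : ∀ v : V, (p.rTensor K) v.1 ∈ ker (j.lTensor B) := by
    rintro ⟨v, hv⟩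
    obtain ⟨w, hw⟩ := hv
    simp only [mem_ker]
    have : (j.lTensor B) ((p.rTensor K) v) = (p.rTensor P) (jA v) :=
      congrFun (congrArg DFunLike.coe comm1) v
    rw [this, ← hw]
    have : (p.rTensor P).comp ι = 0 := by
      rw [hιdef, ← LinearMap.rTensor_comp, hpi, LinearMap.rTensor_zero]
    exact congrFun (congrArg DFunLike.coe this) w
  set ρ : V →ₗ[R] ↥(ker (j.lTensor B)) :=
    LinearMap.codRestrict _ ((p.rTensor K).comp V.subtype) hρmem with hρdef
  -- θ : V → Z ⊗ P
  set θ : V →ₗ[R] Z ⊗[R] P :=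
    ((LinearEquiv.ofInjective ι hι).symm.toLinearMap).comp
      (LinearMap.codRestrict (range ι) (jA.comp V.subtype) (fun v => v.2)) with hθdef
  have hθ : ∀ v : V, ι (θ v) = jA v.1 := by
    intro v
    have : (LinearEquiv.ofInjective ι hι) (θ v) = ⟨jA v.1, v.2⟩ := by
      rw [hθdef]
      simp only [LinearMap.coe_comp, Function.comp_apply, LinearEquiv.coe_coe,
        LinearEquiv.apply_symm_apply]
      exact Subtype.ext rfl
    have := congrArg Subtype.val this
    rwa [LinearEquiv.ofInjective_apply] at this
  -- σ : V → ker (i.rTensor N')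
  have hσmem : ∀ v : V, (q.lTensor Z) (θ v) ∈ ker (i.rTensor N') := by
    intro v
    simp only [mem_ker]
    have e1 : (i.rTensor N') ((q.lTensor Z) (θ v)) = (q.lTensor A) (ι (θ v)) :=
      congrFun (congrArg DFunLike.coe comm2) (θ v)
    rw [e1, hθ v]
    have : (q.lTensor A).comp jA = 0 := by
      rw [hjAdef, ← LinearMap.lTensor_comp, hqj, LinearMap.lTensor_zero]
    exact congrFun (congrArg DFunLike.coe this) v.1
  set σ : V →ₗ[R] ↥(ker (i.rTensor N')) :=
    LinearMap.codRestrict _ ((q.lTensor Z).comp θ) hσmem with hσdef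
  -- exactness facts
  have exK : Function.Exact (i.rTensor K) (p.rTensor K) := rTensor_exact K hip hp
  have exP : Function.Exact (i.rTensor P) (p.rTensor P) := rTensor_exact P hip hp
  have exZ : Function.Exact (j.lTensor Z) (q.lTensor Z) := lTensor_exact Z hjq hq
  have exA : Function.Exact (j.lTensor A) (q.lTensor A) := lTensor_exact A hjq hq
  -- surjectivity of ρ
  have hρsurj : Function.Surjective ρ := by
    rintro ⟨d, hd⟩
    obtain ⟨v, hv⟩ := LinearMap.rTensor_surjective K (g := p) hp d
    have hvV : v ∈ V := by
      have : (p.rTensor P) (jA v) = 0 := by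
        have e1 : (j.lTensor B) ((p.rTensor K) v) = (p.rTensor P) (jA v) :=
          congrFun (congrArg DFunLike.coe comm1) v
        rw [← e1, hv]; exact hd
      exact (exP _).mp this
    exact ⟨⟨v, hvV⟩, Subtype.ext hv⟩
  -- surjectivity of σ
  have hσsurj : Function.Surjective σ := by
    rintro ⟨a, ha⟩
    obtain ⟨w, hw⟩ := LinearMap.lTensor_surjective Z (g := q) hq a
    have hwmem : ι w ∈ range jA := by
      apply (exA _).mp
      have e1 : (q.lTensor A) (ι w) = (i.rTensor N') ((q.lTensor Z) w) :=
        (congrFun (congrArg DFunLike.coe comm2) w).symm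
      rw [e1, hw]; exact ha
    obtain ⟨v, hv⟩ := hwmem
    have hvV : v ∈ V := ⟨w, hv.symm⟩
    have hθv : θ ⟨v, hvV⟩ = w := hι (by rw [hθ ⟨v, hvV⟩, hv])
    refine ⟨⟨v, hvV⟩, Subtype.ext ?_⟩
    show (q.lTensor Z) (θ ⟨v, hvV⟩) = a
    rw [hθv, hw]
  -- kernels agree
  have hker : ker ρ = ker σ := by
    ext v
    simp only [mem_ker, hρdef, hσdef]
    constructor
    · intro h
      have h' : (p.rTensor K) v.1 = 0 := congrArg Subtype.val h
      obtain ⟨u, hu⟩ := (exK _).mp h'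
      apply Subtype.ext
      show (q.lTensor Z) (θ v) = 0
      apply (exZ _).mpr
      refine ⟨u, ?_⟩
      apply hι
      rw [hθ v, ← hu]
      exact (congrFun (congrArg DFunLike.coe comm3) u).symm
    · intro h
      have h' : (q.lTensor Z) (θ v) = 0 := congrArg Subtype.val h
      obtain ⟨u, hu⟩ := (exZ _).mp h'
      have : v.1 = (i.rTensor K) u := by
        apply hjA
        show jA v.1 = jA ((i.rTensor K) u)
        rw [← hθ v, ← hu]
        exact (congrFun (congrArg DFunLike.coe comm3) u).symm
      apply Subtype.ext
      show (p.rTensor K) v.1 = 0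
      rw [this]
      exact (exK _).mpr ⟨u, rfl⟩
  exact ⟨((ρ.quotKerEquivOfSurjective hρsurj).symm.trans
    (Submodule.quotEquivOfEq _ _ hker)).trans (σ.quotKerEquivOfSurjective hσsurj)⟩

/-- `Tor₁(X, N) ≃ ker (Z ⊗ N → A ⊗ N)` for any presentation `0 → Z → A → X → 0` with `A` flat. -/
theorem tor_ker {N Z A X : Type}
    [AddCommGroup N] [Module R N] [AddCommGroup Z] [Module R Z]
    [AddCommGroup A] [Module R A] [AddCommGroup X] [Module R X]
    [Module.Flat R A]
    (i : Z →ₗ[R] A) (pX : A →ₗ[R] X)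
    (hi : Function.Injective i) (hpX : Function.Surjective pX) (hip : Function.Exact i pX) :
    Nonempty ((↑(((Tor (ModuleCat R) 1).obj (ModuleCat.of R X)).obj (ModuleCat.of R N)) : Type)
      ≃ₗ[R] ↥(LinearMap.ker (i.rTensor N))) := by
  classical
  let P : ProjectiveResolution (ModuleCat.of R N) :=
    (HasProjectiveResolution.out (Z := ModuleCat.of R N)).some
  let F : ModuleCat R ⥤ ModuleCat R := (MonoidalCategory.tensoringLeft (ModuleCat R)).obj
    (ModuleCat.of R X)
  let Q := (F.mapHomologicalComplex (ComplexShape.down ℕ)).obj P.complex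
  let S := Q.sc' 2 1 0
  let e1 : ((Tor (ModuleCat R) 1).obj (ModuleCat.of R X)).obj (ModuleCat.of R N) ≅
      (F.leftDerived 1).obj (ModuleCat.of R N) := Iso.refl _
  let e2 := P.isoLeftDerivedObj F 1
  let e3 : (HomologicalComplex.homologyFunctor (ModuleCat R) (ComplexShape.down ℕ) 1).obj Q ≅
      Q.homology 1 := Iso.refl _
  let e4 : Q.homology 1 ≅ S.homology := Q.homologyIsoSc' 2 1 0 (by simp) (by simp)
  let e5 := S.moduleCatHomologyIso
  let E := (((e1 ≪≫ e2) ≪≫ e3 ≪≫ e4) ≪≫ e5).toLinearEquiv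
  let d10 : ↥(P.complex.X 1) →ₗ[R] ↥(P.complex.X 0) := (P.complex.d 1 0).hom
  let d21 : ↥(P.complex.X 2) →ₗ[R] ↥(P.complex.X 1) := (P.complex.d 2 1).hom
  -- the augmentation
  let ε : ↥(P.complex.X 0) →ₗ[R] N := (P.π.f 0).hom
  have hεsurj : Function.Surjective ε :=
    (ModuleCat.epi_iff_surjective (P.π.f 0)).mp inferInstance
  have hd10ε : ∀ x, ε (d10 x) = 0 := by
    intro x
    exact LinearMap.congr_fun (congrArg ModuleCat.Hom.hom P.complex_d_comp_π_f_zero) x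
  have hrange : LinearMap.range d10 = LinearMap.ker ε := P.exact₀.moduleCat_range_eq_ker
  -- flatness of P₀
  haveI : Module.Projective R ↥(P.complex.X 0) :=
    (IsProjective.iff_projective (R := R) (P := ↥(P.complex.X 0))).mpr (P.projective 0)
  haveI : Module.Flat R ↥(P.complex.X 0) := Module.Flat.of_projective
  -- the truncated presentation of N
  let j : ↥(LinearMap.ker ε) →ₗ[R] ↥(P.complex.X 0) := (LinearMap.ker ε).subtype
  have hj : Function.Injective j := Subtype.val_injective
  let π' : ↥(P.complex.X 1) →ₗ[R] ↥(LinearMap.ker ε) :=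
    LinearMap.codRestrict _ d10 (fun x => hd10ε x)
  have hπ'surj : Function.Surjective π' := by
    rintro ⟨k, hk⟩
    rw [← hrange] at hk
    obtain ⟨x, hx⟩ := hk
    exact ⟨x, Subtype.ext hx⟩
  have hjπ : j ∘ₗ π' = d10 := LinearMap.ext fun _ => rfl
  have hrk : LinearMap.range d21 = LinearMap.ker d10 :=
    (ShortComplex.moduleCat_exact_iff_range_eq_ker _).mp (P.exact_succ 0)
  have hex21 : Function.Exact d21 (j ∘ₗ π') := by
    rw [hjπ]
    exact LinearMap.exact_iff.mpr hrk.symm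
  have hexjε : Function.Exact j ε := by
    intro y
    constructor
    · intro h
      exact ⟨⟨y, h⟩, rfl⟩
    · rintro ⟨⟨z, hz⟩, rfl⟩
      exact hz
  obtain ⟨E2⟩ := homology_ker (X := X) π' j d21 hπ'surj hj hex21 S.moduleCatToCycles
    (fun x => rfl)
  obtain ⟨E3⟩ := balancing i pX j ε hi hpX hip hj hεsurj hexjε
  exact ⟨(E.trans E2).trans E3⟩

theorem ker_cycleComparison (f : Fa →ₗ[R] Fb) :
    LinearMap.ker (cycleComparison f N) = LinearMap.ker (((LinearMap.ker f).subtype).rTensor N) :=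
  LinearMap.ker_codRestrict _ _ _

theorem exact_subtype_rangeRestrict (f : Fa →ₗ[R] Fb) :
    Function.Exact (LinearMap.ker f).subtype f.rangeRestrict := by
  intro y
  constructor
  · intro h
    have : f y = 0 := congrArg Subtype.val h
    exact ⟨⟨y, this⟩, rfl⟩
  · rintro ⟨⟨x, hx⟩, rfl⟩
    exact Subtype.ext hx

theorem quot_range_cycleComparison_equiv (f : Fa →ₗ[R] Fb) :
    Nonempty ((↥(LinearMap.ker (f.rTensor N)) ⧸ LinearMap.range (cycleComparison f N)) ≃ₗ[R]
      ↥(LinearMap.ker (((LinearMap.range f).subtype).rTensor N))) := by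
  set p := f.rangeRestrict with hpdef
  have hp : Function.Surjective p := f.surjective_rangeRestrict
  have hcomp : (LinearMap.range f).subtype ∘ₗ p = f := LinearMap.ext fun _ => rfl
  have hcompT : ((LinearMap.range f).subtype).rTensor N ∘ₗ p.rTensor N = f.rTensor N := by
    rw [← LinearMap.rTensor_comp, hcomp]
  have hmem : ∀ v : ↥(LinearMap.ker (f.rTensor N)),
      (p.rTensor N) v.1 ∈ LinearMap.ker (((LinearMap.range f).subtype).rTensor N) := by
    rintro ⟨v, hv⟩
    rw [LinearMap.mem_ker, ← LinearMap.comp_apply, hcompT]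
    exact hv
  set g' : ↥(LinearMap.ker (f.rTensor N)) →ₗ[R]
      ↥(LinearMap.ker (((LinearMap.range f).subtype).rTensor N)) :=
    LinearMap.codRestrict _ ((p.rTensor N) ∘ₗ (LinearMap.ker (f.rTensor N)).subtype) hmem
    with hg'def
  have hg'surj : Function.Surjective g' := by
    rintro ⟨y, hy⟩
    obtain ⟨v, hv⟩ := LinearMap.rTensor_surjective N (g := p) hp y
    have hvk : v ∈ LinearMap.ker (f.rTensor N) := by
      rw [LinearMap.mem_ker, ← hcompT, LinearMap.comp_apply, hv]
      exact hy
    exact ⟨⟨v, hvk⟩, Subtype.ext hv⟩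
  have hker : LinearMap.range (cycleComparison f N) = LinearMap.ker g' := by
    ext v
    constructor
    · rintro ⟨x, rfl⟩
      apply Subtype.ext
      show (p.rTensor N) ((cycleComparison f N x : Fa ⊗[R] N)) = 0
      have hval : (cycleComparison f N x : Fa ⊗[R] N) = ((LinearMap.ker f).subtype).rTensor N x :=
        rfl
      rw [hval, ← LinearMap.comp_apply, ← LinearMap.rTensor_comp]
      have : p ∘ₗ (LinearMap.ker f).subtype = 0 :=
        LinearMap.ext fun z => (exact_subtype_rangeRestrict f).apply_apply_eq_zero z
      rw [this, LinearMap.rTensor_zero]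
      rfl
    · intro hv
      have h' : (p.rTensor N) v.1 = 0 := congrArg Subtype.val hv
      obtain ⟨x, hx⟩ := (rTensor_exact N (exact_subtype_rangeRestrict f) hp _).mp h'
      exact ⟨x, Subtype.ext hx⟩
  have e1 : (↥(LinearMap.ker (f.rTensor N)) ⧸ LinearMap.range (cycleComparison f N)) ≃ₗ[R]
      (↥(LinearMap.ker (f.rTensor N)) ⧸ LinearMap.ker g') :=
    Submodule.quotEquivOfEq _ _ hker
  have e2 := LinearMap.quotKerEquivOfSurjective (R := R) (M := ↥(LinearMap.ker (f.rTensor N)))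
    (M₂ := ↥(LinearMap.ker (((LinearMap.range f).subtype).rTensor N))) g' hg'surj
  exact ⟨e1.trans e2⟩


end AuxLemmas

/-- **Lemma 1.1 (serra), first part.** Let `R` be a ring and `F` a chain complex of
`R`-modules with `F_a` and `F_{a-1}` flat; only the differential `∂_a : F_a → F_{a-1}`
is relevant, since `Z_a = ker ∂_a`, `B_{a-1} = im ∂_a` and `C_{a-1} = coker ∂_a`.
For an `R`-module `N` there is an exact sequence
`0 → Tor₁(B_{a-1}, N) → Z_a ⊗ N → Z_a(F ⊗ N) → Tor₁(C_{a-1}, N) → 0`,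
whose middle map is the natural map `φ_a : z ⊗ x ↦ z ⊗ x`. -/

theorem tor_cycles_exact_sequence [Module.Flat R Fa] [Module.Flat R Fb] (f : Fa →ₗ[R] Fb) :
    ∃ (α : ↑(((Tor (ModuleCat R) 1).obj
          (ModuleCat.of R ↥(LinearMap.range f))).obj (ModuleCat.of R N)) →ₗ[R]
            (↥(LinearMap.ker f) ⊗[R] N))
      (g : ↥(LinearMap.ker (f.rTensor N)) →ₗ[R]
        ↑(((Tor (ModuleCat R) 1).obj
          (ModuleCat.of R (Fb ⧸ LinearMap.range f))).obj (ModuleCat.of R N))),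
      Function.Injective α ∧
      Function.Exact α (cycleComparison f N) ∧
      Function.Exact (cycleComparison f N) g ∧
      Function.Surjective g := by
  classical
  -- the `Tor₁` computations via presentations with flat middle terms
  obtain ⟨eB⟩ := tor_ker (N := N) (LinearMap.ker f).subtype f.rangeRestrict
    Subtype.val_injective f.surjective_rangeRestrict (exact_subtype_rangeRestrict f)
  obtain ⟨eC⟩ := tor_ker (N := N) (LinearMap.range f).subtype (LinearMap.range f).mkQ
    Subtype.val_injective (Submodule.mkQ_surjective _)
    (LinearMap.exact_subtype_mkQ (LinearMap.range f))
  -- construction of α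
  let αequiv := eB.trans (LinearEquiv.ofEq _ _ (ker_cycleComparison (N := N) f)).symm
  refine ⟨(LinearMap.ker (cycleComparison f N)).subtype ∘ₗ αequiv.toLinearMap, ?_⟩
  -- construction of g
  obtain ⟨qequiv⟩ := quot_range_cycleComparison_equiv (N := N) f
  let gequiv := qequiv.trans eC.symm
  refine ⟨gequiv.toLinearMap ∘ₗ (LinearMap.range (cycleComparison f N)).mkQ, ?_, ?_, ?_, ?_⟩
  · exact Subtype.val_injective.comp αequiv.injective
  · apply LinearMap.exact_iff.mpr
    rw [LinearMap.range_comp, LinearEquiv.range, Submodule.map_top, Submodule.range_subtype]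
  · apply LinearMap.exact_iff.mpr
    rw [LinearMap.ker_comp, LinearEquiv.ker, Submodule.comap_bot, Submodule.ker_mkQ]
  · exact gequiv.surjective.comp (Submodule.mkQ_surjective _)
end

section
/- Let K be the Koszul complex on an R-module map E_1 → R (E_1 free) with differential ∂, and M an R-module; set K^M = K ⊗_R M. For non-negative integers a, b with n = a + b, let β_{a,b} : Z_n(K^M) → Z_a(K ⊗_R Z_b(K^M)) be the map induced by the diagonal Δ ⊗ M followed by projection to the (a,b)-component, and let α_{a,b} : Z_a(K ⊗_R Z_b(K^M)) → Z_n(K^M) be induced by the multiplication μ ⊗ M. Then α_{a,b} ∘ β_{a,b} = C(a+b, a) · id on Z_{a+b}(K^M). -/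
open TensorProduct ExteriorAlgebra

section Aux
open DirectSum

variable {R V : Type} [CommRing R] [AddCommGroup V] [Module R V]

lemma iotamem (x : V) : ι R x ∈ ⋀[R]^1 V := by
  simpa only [pow_one] using LinearMap.mem_range_self _ x

lemma proj_iota_mul_succ (x : V) (v : ExteriorAlgebra R V) (i : ℕ) :
    GradedAlgebra.proj (fun i : ℕ => ⋀[R]^i V) (i+1) (ι R x * v)
      = ι R x * GradedAlgebra.proj (fun i : ℕ => ⋀[R]^i V) i v := by
  rw [GradedAlgebra.proj_apply, GradedAlgebra.proj_apply, add_comm i 1,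
    DirectSum.coe_decompose_mul_add_of_left_mem (𝒜 := fun i : ℕ => ⋀[R]^i V) (iotamem x)]

lemma proj_iota_mul_zero (x : V) (v : ExteriorAlgebra R V) :
    GradedAlgebra.proj (fun i : ℕ => ⋀[R]^i V) 0 (ι R x * v) = 0 := by
  rw [GradedAlgebra.proj_apply,
    DirectSum.coe_decompose_mul_of_left_mem_of_not_le (𝒜 := fun i : ℕ => ⋀[R]^i V)
      (iotamem x) (by norm_num)]

lemma mul_iota_comm (x : V) {a : ℕ} (u : ExteriorAlgebra R V) (hu : u ∈ ⋀[R]^a V) :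
    u * ι R x = (-1 : ℤˣ)^a • (ι R x * u) := by
  induction hu using Submodule.pow_induction_on_left' with
  | algebraMap r => rw [pow_zero, one_smul, Algebra.commutes]
  | add u v i hu hv ihu ihv => rw [add_mul, mul_add, ihu, ihv, smul_add]
  | mem_mul m hm i u hu ih =>
      obtain ⟨y, rfl⟩ := hm
      have hyx : ι R y * ι R x = -(ι R x * ι R y) := by
        rw [eq_neg_iff_add_eq_zero, ι_add_mul_swap]
      rw [mul_assoc, ih, mul_smul_comm, ← mul_assoc, hyx, neg_mul, mul_assoc, smul_neg,
        pow_succ, mul_smul]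
      rw [Units.neg_smul, one_smul]
      exact (smul_neg _ _).symm

noncomputable def Gmap (a b : ℕ) :
    GradedTensorProduct R (fun i : ℕ => ⋀[R]^i V) (fun i : ℕ => ⋀[R]^i V)
      →ₗ[R] ExteriorAlgebra R V :=
  (LinearMap.mul' R (ExteriorAlgebra R V)).comp
    ((TensorProduct.map
        (GradedAlgebra.proj (fun i : ℕ => ⋀[R]^i V) a)
        (GradedAlgebra.proj (fun i : ℕ => ⋀[R]^i V) b)).comp
      ((GradedTensorProduct.of R _ _).symm.toLinearMap))

lemma Gmap_tmul (a b : ℕ) (u v : ExteriorAlgebra R V) :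
    Gmap a b (u ᵍ⊗ₜ[R] v) =
      GradedAlgebra.proj (fun i : ℕ => ⋀[R]^i V) a u *
        GradedAlgebra.proj (fun i : ℕ => ⋀[R]^i V) b v := by
  simp [Gmap, GradedTensorProduct.tmul, GradedTensorProduct.of_symm_of]

lemma proj_coe_same (i : ℕ) (u : ⋀[R]^i V) :
    GradedAlgebra.proj (fun i : ℕ => ⋀[R]^i V) i (u : ExteriorAlgebra R V) = u := by
  rw [GradedAlgebra.proj_apply, DirectSum.decompose_of_mem_same (ℳ := fun i : ℕ => ⋀[R]^i V) u.2]

lemma proj_coe_ne {i j : ℕ} (h : i ≠ j) (u : ⋀[R]^i V) :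
    GradedAlgebra.proj (fun i : ℕ => ⋀[R]^i V) j (u : ExteriorAlgebra R V) = 0 := by
  rw [GradedAlgebra.proj_apply, DirectSum.decompose_of_mem_ne (ℳ := fun i : ℕ => ⋀[R]^i V) u.2 h]

lemma tmul_one_mul_tmul (x u v : ExteriorAlgebra R V) :
    ((x ᵍ⊗ₜ[R] (1 : ExteriorAlgebra R V)) * (u ᵍ⊗ₜ[R] v) :
        GradedTensorProduct R (fun i : ℕ => ⋀[R]^i V) (fun i : ℕ => ⋀[R]^i V))
      = (x * u) ᵍ⊗ₜ[R] v := by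
  induction u using DirectSum.Decomposition.inductionOn (fun i : ℕ => ⋀[R]^i V) with
  | zero =>
      show _ * GradedTensorProduct.of R _ _ ((0 : ExteriorAlgebra R V) ⊗ₜ v) = _
      rw [TensorProduct.zero_tmul, map_zero, mul_zero, mul_zero]
      show (0 : _) = GradedTensorProduct.of R _ _ ((0 : ExteriorAlgebra R V) ⊗ₜ v)
      rw [TensorProduct.zero_tmul, map_zero]
  | homogeneous ui => exact GradedTensorProduct.tmul_one_mul_coe_tmul (fun i : ℕ => ⋀[R]^i V) (fun i : ℕ => ⋀[R]^i V) x ui v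
  | add u₁ u₂ h₁ h₂ =>
      have e1 : ((u₁ + u₂) ᵍ⊗ₜ[R] v :
          GradedTensorProduct R (fun i : ℕ => ⋀[R]^i V) (fun i : ℕ => ⋀[R]^i V))
          = u₁ ᵍ⊗ₜ[R] v + u₂ ᵍ⊗ₜ[R] v := by
        show GradedTensorProduct.of R _ _ _ = _
        rw [TensorProduct.add_tmul, map_add]
      have e2 : ((x * (u₁ + u₂)) ᵍ⊗ₜ[R] v :
          GradedTensorProduct R (fun i : ℕ => ⋀[R]^i V) (fun i : ℕ => ⋀[R]^i V))
          = (x * u₁) ᵍ⊗ₜ[R] v + (x * u₂) ᵍ⊗ₜ[R] v := by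
        show GradedTensorProduct.of R _ _ _ = _
        rw [mul_add, TensorProduct.add_tmul, map_add]
      rw [e1, mul_add, h₁, h₂, e2]

lemma add_gtmul (u₁ u₂ v : ExteriorAlgebra R V) :
    (((u₁ + u₂) ᵍ⊗ₜ[R] v) :
        GradedTensorProduct R (fun i : ℕ => ⋀[R]^i V) (fun i : ℕ => ⋀[R]^i V))
      = u₁ ᵍ⊗ₜ[R] v + u₂ ᵍ⊗ₜ[R] v := by
  show GradedTensorProduct.of R _ _ _ = _
  rw [TensorProduct.add_tmul, map_add]

lemma zero_gtmul (v : ExteriorAlgebra R V) :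
    (((0 : ExteriorAlgebra R V) ᵍ⊗ₜ[R] v) :
        GradedTensorProduct R (fun i : ℕ => ⋀[R]^i V) (fun i : ℕ => ⋀[R]^i V)) = 0 := by
  show GradedTensorProduct.of R _ _ _ = _
  rw [TensorProduct.zero_tmul, map_zero]

lemma map_unit_smul {M N : Type} [AddCommGroup M] [Module R M] [AddCommGroup N] [Module R N]
    (f : M →ₗ[R] N) (u : ℤˣ) (m : M) : f (u • m) = u • f m := by
  rw [Units.smul_def, Units.smul_def, map_zsmul]

lemma Gmap_iotaL (x : V) (a b : ℕ)
    (t : GradedTensorProduct R (fun i : ℕ => ⋀[R]^i V) (fun i : ℕ => ⋀[R]^i V)) :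
    Gmap (a+1) b ((ι R x ᵍ⊗ₜ[R] (1 : ExteriorAlgebra R V)) * t)
      = ι R x * Gmap a b t := by
  have ht : t = GradedTensorProduct.of R _ _ ((GradedTensorProduct.of R _ _).symm t) :=
    (GradedTensorProduct.symm_of_of _ _ _).symm
  rw [ht]
  generalize ((GradedTensorProduct.of R _ _).symm t) = s
  induction s using TensorProduct.induction_on with
  | zero => rw [map_zero, mul_zero, map_zero, map_zero, mul_zero]
  | tmul u v =>
      show Gmap (a+1) b ((ι R x ᵍ⊗ₜ[R] (1:ExteriorAlgebra R V)) * (u ᵍ⊗ₜ[R] v))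
        = ι R x * Gmap a b (u ᵍ⊗ₜ[R] v)
      rw [tmul_one_mul_tmul, Gmap_tmul, Gmap_tmul, proj_iota_mul_succ, mul_assoc]
  | add s₁ s₂ h₁ h₂ => rw [map_add, mul_add, map_add, map_add, h₁, h₂, mul_add]

lemma Gmap_iotaL_zero (x : V) (b : ℕ)
    (t : GradedTensorProduct R (fun i : ℕ => ⋀[R]^i V) (fun i : ℕ => ⋀[R]^i V)) :
    Gmap 0 b ((ι R x ᵍ⊗ₜ[R] (1 : ExteriorAlgebra R V)) * t) = 0 := by
  have ht : t = GradedTensorProduct.of R _ _ ((GradedTensorProduct.of R _ _).symm t) :=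
    (GradedTensorProduct.symm_of_of _ _ _).symm
  rw [ht]
  generalize ((GradedTensorProduct.of R _ _).symm t) = s
  induction s using TensorProduct.induction_on with
  | zero => rw [map_zero, mul_zero, map_zero]
  | tmul u v =>
      show Gmap 0 b ((ι R x ᵍ⊗ₜ[R] (1:ExteriorAlgebra R V)) * (u ᵍ⊗ₜ[R] v)) = 0
      rw [tmul_one_mul_tmul, Gmap_tmul, proj_iota_mul_zero, zero_mul]
  | add s₁ s₂ h₁ h₂ => rw [map_add, mul_add, map_add, h₁, h₂, add_zero]

lemma Gmap_iotaR (x : V) (a b : ℕ)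
    (t : GradedTensorProduct R (fun i : ℕ => ⋀[R]^i V) (fun i : ℕ => ⋀[R]^i V)) :
    Gmap a (b+1) (((1 : ExteriorAlgebra R V) ᵍ⊗ₜ[R] ι R x) * t)
      = ι R x * Gmap a b t := by
  have ht : t = GradedTensorProduct.of R _ _ ((GradedTensorProduct.of R _ _).symm t) :=
    (GradedTensorProduct.symm_of_of _ _ _).symm
  rw [ht]
  generalize ((GradedTensorProduct.of R _ _).symm t) = s
  induction s using TensorProduct.induction_on with
  | zero => rw [map_zero, mul_zero, map_zero, map_zero, mul_zero]
  | tmul u v =>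
      show Gmap a (b+1) (((1:ExteriorAlgebra R V) ᵍ⊗ₜ[R] ι R x) * (u ᵍ⊗ₜ[R] v))
        = ι R x * Gmap a b (u ᵍ⊗ₜ[R] v)
      induction u using DirectSum.Decomposition.inductionOn (fun i : ℕ => ⋀[R]^i V) with
      | zero => rw [zero_gtmul, mul_zero, map_zero, map_zero, mul_zero]
      | homogeneous ui =>
          rename_i i
          have e : (((1 : ExteriorAlgebra R V) ᵍ⊗ₜ[R] ι R x) * ((ui : ExteriorAlgebra R V) ᵍ⊗ₜ[R] v) :
              GradedTensorProduct R (fun i : ℕ => ⋀[R]^i V) (fun i : ℕ => ⋀[R]^i V))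
              = (-1 : ℤˣ)^(1 * i) •
                (((1 : ExteriorAlgebra R V) * (ui : ExteriorAlgebra R V)) ᵍ⊗ₜ[R] (ι R x * v)) :=
            GradedTensorProduct.tmul_coe_mul_coe_tmul (fun i : ℕ => ⋀[R]^i V)
              (fun i : ℕ => ⋀[R]^i V) 1 ⟨ι R x, iotamem x⟩ ui v
          rw [e, one_mul (ui : ExteriorAlgebra R V), map_unit_smul, Gmap_tmul,
            proj_iota_mul_succ, one_mul i]
          by_cases h : i = a
          · subst h
            rw [proj_coe_same, ← mul_assoc (ui : ExteriorAlgebra R V),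
              mul_iota_comm x (ui : ExteriorAlgebra R V) ui.2, smul_mul_assoc, smul_smul,
              ← pow_add, Even.neg_one_pow ⟨i, rfl⟩, one_smul, mul_assoc, Gmap_tmul,
              proj_coe_same]
          · rw [proj_coe_ne h ui, zero_mul, smul_zero, Gmap_tmul,
              proj_coe_ne h ui, zero_mul, mul_zero]
      | add u₁ u₂ hu₁ hu₂ =>
          rw [add_gtmul, mul_add, map_add, hu₁, hu₂, map_add, mul_add]
  | add s₁ s₂ h₁ h₂ => rw [map_add, mul_add, map_add, map_add, h₁, h₂, mul_add]

lemma Gmap_iotaR_zero (x : V) (a : ℕ)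
    (t : GradedTensorProduct R (fun i : ℕ => ⋀[R]^i V) (fun i : ℕ => ⋀[R]^i V)) :
    Gmap a 0 (((1 : ExteriorAlgebra R V) ᵍ⊗ₜ[R] ι R x) * t) = 0 := by
  have ht : t = GradedTensorProduct.of R _ _ ((GradedTensorProduct.of R _ _).symm t) :=
    (GradedTensorProduct.symm_of_of _ _ _).symm
  rw [ht]
  generalize ((GradedTensorProduct.of R _ _).symm t) = s
  induction s using TensorProduct.induction_on with
  | zero => rw [map_zero, mul_zero, map_zero]
  | tmul u v =>
      show Gmap a 0 (((1:ExteriorAlgebra R V) ᵍ⊗ₜ[R] ι R x) * (u ᵍ⊗ₜ[R] v)) = 0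
      induction u using DirectSum.Decomposition.inductionOn (fun i : ℕ => ⋀[R]^i V) with
      | zero => rw [zero_gtmul, mul_zero, map_zero]
      | homogeneous ui =>
          rename_i i
          have e : (((1 : ExteriorAlgebra R V) ᵍ⊗ₜ[R] ι R x) * ((ui : ExteriorAlgebra R V) ᵍ⊗ₜ[R] v) :
              GradedTensorProduct R (fun i : ℕ => ⋀[R]^i V) (fun i : ℕ => ⋀[R]^i V))
              = (-1 : ℤˣ)^(1 * i) •
                (((1 : ExteriorAlgebra R V) * (ui : ExteriorAlgebra R V)) ᵍ⊗ₜ[R] (ι R x * v)) :=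
            GradedTensorProduct.tmul_coe_mul_coe_tmul (fun i : ℕ => ⋀[R]^i V)
              (fun i : ℕ => ⋀[R]^i V) 1 ⟨ι R x, iotamem x⟩ ui v
          rw [e, map_unit_smul, Gmap_tmul, proj_iota_mul_zero, mul_zero, smul_zero]
      | add u₁ u₂ hu₁ hu₂ =>
          rw [add_gtmul, mul_add, map_add, hu₁, hu₂, add_zero]
  | add s₁ s₂ h₁ h₂ => rw [map_add, mul_add, map_add, h₁, h₂, add_zero]

lemma key (Δ : ExteriorAlgebra R V →ₐ[R]
      GradedTensorProduct R (fun i : ℕ => ⋀[R]^i V) (fun i : ℕ => ⋀[R]^i V))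
    (hΔ : ∀ v : V, Δ (ι R v) =
      (ι R v) ᵍ⊗ₜ[R] (1 : ExteriorAlgebra R V) + (1 : ExteriorAlgebra R V) ᵍ⊗ₜ[R] (ι R v))
    {n : ℕ} {w : ExteriorAlgebra R V} (hw : w ∈ ⋀[R]^n V) :
    ∀ a b : ℕ, a + b = n → Gmap a b (Δ w) = n.choose a • w := by
  induction hw using Submodule.pow_induction_on_left' with
  | algebraMap r =>
      intro a b h
      obtain ⟨rfl, rfl⟩ := Nat.add_eq_zero.mp h
      have mem0 : algebraMap R (ExteriorAlgebra R V) r ∈ ⋀[R]^0 V := by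
        show _ ∈ (LinearMap.range (ι R : V →ₗ[R] ExteriorAlgebra R V)) ^ 0
        rw [pow_zero]; exact Submodule.mem_one.mpr ⟨r, rfl⟩
      have mem1 : (1 : ExteriorAlgebra R V) ∈ ⋀[R]^0 V := by
        show _ ∈ (LinearMap.range (ι R : V →ₗ[R] ExteriorAlgebra R V)) ^ 0
        rw [pow_zero]; exact Submodule.mem_one.mpr ⟨1, map_one _⟩
      rw [AlgHom.commutes, GradedTensorProduct.algebraMap_def, Gmap_tmul,
        GradedAlgebra.proj_apply, GradedAlgebra.proj_apply,
        DirectSum.decompose_of_mem_same (ℳ := fun i : ℕ => ⋀[R]^i V) mem0,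
        DirectSum.decompose_of_mem_same (ℳ := fun i : ℕ => ⋀[R]^i V) mem1,
        mul_one, Nat.choose_self, one_smul]
  | add u v i hu hv ihu ihv =>
      intro a b h
      rw [map_add, map_add, ihu a b h, ihv a b h, smul_add]
  | mem_mul m hm i w hw ih =>
      obtain ⟨x, rfl⟩ := hm
      intro a b h
      rw [map_mul, hΔ, add_mul, map_add]
      cases a with
      | zero =>
          have hb : b = i + 1 := by omega
          subst hb
          rw [Gmap_iotaL_zero, Gmap_iotaR x 0 i, ih 0 i (Nat.zero_add i), zero_add,
            Nat.choose_zero_right, Nat.choose_zero_right, one_smul, one_smul]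
      | succ a' =>
          have ha : a' + b = i := by omega
          rw [Gmap_iotaL x a' b, ih a' b ha]
          cases b with
          | zero =>
              have : a' = i := by omega
              subst this
              rw [Gmap_iotaR_zero, add_zero, Nat.choose_self, Nat.choose_self, one_smul, one_smul]
          | succ b' =>
              have hb : a' + 1 + b' = i := by omega
              rw [Gmap_iotaR x (a'+1) b', ih (a'+1) b' hb, Nat.choose_succ_succ,
                mul_smul_comm, mul_smul_comm, ← add_smul]

end Aux

/-- **Lemma 2.6 (BRS).** Let `K` be the Koszul complex of an `R`-module map `f : E₁ → R`
(`E₁` free), i.e. the exterior algebra `E = ⋀ E₁` with the unique degree `-1` derivation `dK`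
extending `f` (characterized by `dK(1) = 0` and `dK(ι x · w) = f x • w - ι x · dK w`), and let
`M` be an `R`-module, `K^M = K ⊗ M`.  Let `Δ` be the diagonal of `E` (the unique graded
algebra map to the Koszul-signed tensor square with `Δ(ι x) = ι x ⊗ 1 + 1 ⊗ ι x`).  For
`a, b ≥ 0` with `n = a + b`, the composition `α_{a,b} ∘ β_{a,b}` — induced on cycles by
`μ ⊗ M` and the `(a,b)`-component of `Δ ⊗ M` — equals `C(a+b, a) • id` on `Z_{a+b}(K^M)`. -/
theorem alpha_beta_eq_binomial_smul
    (R : Type) [CommRing R] (V : Type) [AddCommGroup V] [Module R V] [Module.Free R V]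
    (M : Type) [AddCommGroup M] [Module R M]
    (f : V →ₗ[R] R)
    (dK : ExteriorAlgebra R V →ₗ[R] ExteriorAlgebra R V)
    (hdK1 : dK 1 = 0)
    (hdK : ∀ (v : V) (w : ExteriorAlgebra R V), dK (ι R v * w) = f v • w - ι R v * dK w)
    (Δ : ExteriorAlgebra R V →ₐ[R]
      GradedTensorProduct R (fun i : ℕ => ⋀[R]^i V) (fun i : ℕ => ⋀[R]^i V))
    (hΔ : ∀ v : V, Δ (ι R v) =
      (ι R v) ᵍ⊗ₜ[R] (1 : ExteriorAlgebra R V) + (1 : ExteriorAlgebra R V) ᵍ⊗ₜ[R] (ι R v))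
    (a b : ℕ) (z : ExteriorAlgebra R V ⊗[R] M)
    (hz : z ∈ LinearMap.range ((Submodule.subtype (⋀[R]^(a+b) V)).rTensor M))
    (hcycle : dK.rTensor M z = 0) :
    LinearMap.rTensor M
      ((LinearMap.mul' R (ExteriorAlgebra R V)).comp
        ((TensorProduct.map
            (GradedAlgebra.proj (fun i : ℕ => ⋀[R]^i V) a)
            (GradedAlgebra.proj (fun i : ℕ => ⋀[R]^i V) b)).comp
          (((GradedTensorProduct.of R _ _).symm.toLinearMap).comp Δ.toLinearMap))) z
      = ((a + b).choose a) • z := by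
  obtain ⟨z', rfl⟩ := hz
  clear hcycle
  induction z' using TensorProduct.induction_on with
  | zero => rw [map_zero, map_zero, smul_zero]
  | tmul w m =>
      rw [LinearMap.rTensor_tmul, LinearMap.rTensor_tmul]
      have hw : Gmap a b (Δ (w : ExteriorAlgebra R V)) = ((a+b).choose a) • (w : ExteriorAlgebra R V) :=
        key Δ hΔ w.2 a b rfl
      show Gmap a b (Δ (w : ExteriorAlgebra R V)) ⊗ₜ[R] m = _
      rw [hw]
      exact map_nsmul ((TensorProduct.mk R (ExteriorAlgebra R V) M).flip m) _ _
  | add z₁ z₂ h₁ h₂ => rw [map_add, map_add, h₁, h₂, smul_add]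
end

section
/- Say a prime p is good for a non-negative integer n if the binomial coefficient C(n, i) is not divisible by p for all 0 ≤ i ≤ n. Then p is good for n if and only if p > n, or n + 1 = p^s · u for some integers s ≥ 1 and 2 ≤ u ≤ p. Moreover, for a given n, at most one prime p with p ≤ n satisfies the second condition. -/
/-- A prime `p` is *good* for a non-negative integer `n` if `p ∤ C(n, i)` for all `0 ≤ i ≤ n`. -/
def IsGoodPrime (p n : ℕ) : Prop :=
  ∀ i : ℕ, i ≤ n → ¬ (p ∣ Nat.choose n i)

lemma good_of_lt {p n : ℕ} (hp : p.Prime) (h : n < p) : IsGoodPrime p n := by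
  intro i hi hdvd
  have : p ∣ Nat.factorial n := hdvd.trans ⟨Nat.factorial i * Nat.factorial (n - i),
    by rw [← mul_assoc, Nat.choose_mul_factorial_mul_factorial hi]⟩
  exact absurd ((Nat.Prime.dvd_factorial hp).mp this) (by omega)

lemma succ_eq_of_mod {p n : ℕ} (hp2 : 2 ≤ p) (hmod : n % p = p - 1) :
    n + 1 = p * (n / p + 1) := by
  have h := Nat.div_add_mod n p
  rw [mul_add, mul_one]
  omega

lemma good_step {p n : ℕ} (hp : p.Prime) (hn : p ≤ n) :
    IsGoodPrime p n ↔ (n % p = p - 1 ∧ IsGoodPrime p (n / p)) := by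
  haveI : Fact p.Prime := ⟨hp⟩
  have hp2 := hp.two_le
  constructor
  · intro hg
    have hmod : n % p = p - 1 := by
      by_contra h
      have h1 : n % p + 1 < p := by have := Nat.mod_lt n (show 0 < p by omega); omega
      have hi : n % p + 1 ≤ n := by omega
      apply hg (n % p + 1) hi
      have hl := Choose.choose_modEq_choose_mod_mul_choose_div_nat (p := p) (n := n) (k := n % p + 1)
      rw [Nat.mod_eq_of_lt h1, Nat.div_eq_of_lt h1,
        Nat.choose_eq_zero_of_lt (show n % p < n % p + 1 by omega), zero_mul] at hl
      exact (Nat.modEq_zero_iff_dvd).mp hl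
    refine ⟨hmod, fun j hj hdvd => ?_⟩
    apply hg (j * p) (by calc j * p ≤ (n / p) * p := Nat.mul_le_mul_right p hj
                            _ ≤ n := Nat.div_mul_le_self n p)
    have hl := Choose.choose_modEq_choose_mod_mul_choose_div_nat (p := p) (n := n) (k := j * p)
    have e1 : j * p % p = 0 := Nat.mul_mod_left j p
    have e2 : j * p / p = j := by rw [Nat.mul_div_assoc j (dvd_refl p), Nat.div_self (by omega), mul_one]
    rw [e1, e2, Nat.choose_zero_right, one_mul] at hl
    exact (Nat.modEq_zero_iff_dvd).mp (hl.trans ((Nat.modEq_zero_iff_dvd).mpr hdvd))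
  · rintro ⟨hmod, hg⟩ i hi hdvd
    have hl := Choose.choose_modEq_choose_mod_mul_choose_div_nat (p := p) (n := n) (k := i)
    have h1 : ¬ p ∣ Nat.choose (n % p) (i % p) := by
      apply good_of_lt hp (by omega)
      rw [hmod]; have := Nat.mod_lt i (show 0 < p by omega); omega
    have h2 : ¬ p ∣ Nat.choose (n / p) (i / p) := hg _ (Nat.div_le_div_right hi)
    have hdd : p ∣ Nat.choose (n % p) (i % p) * Nat.choose (n / p) (i / p) :=
      (Nat.modEq_zero_iff_dvd).mp (hl.symm.trans ((Nat.modEq_zero_iff_dvd).mpr hdvd))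
    rcases hp.dvd_mul.mp hdd with h | h
    · exact h1 h
    · exact h2 h

lemma good_iff_aux {p : ℕ} (hp : p.Prime) : ∀ n, IsGoodPrime p n ↔
    ∃ s u : ℕ, 1 ≤ u ∧ u ≤ p ∧ n + 1 = p ^ s * u := by
  have hp2 := hp.two_le
  intro n
  induction n using Nat.strong_induction_on with
  | _ n ih =>
    rcases lt_or_ge n p with h | h
    · constructor
      · intro _; exact ⟨0, n + 1, by omega, by omega, by ring⟩
      · intro _; exact good_of_lt hp h
    · rw [good_step hp h]
      have hdiv : n / p < n := Nat.div_lt_self (by omega) (by omega)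
      rw [ih _ hdiv]
      constructor
      · rintro ⟨hmod, s, u, hu1, hu2, heq⟩
        refine ⟨s + 1, u, hu1, hu2, ?_⟩
        rw [succ_eq_of_mod hp2 hmod, heq]; ring
      · rintro ⟨s, u, hu1, hu2, heq⟩
        have hs : s ≠ 0 := by rintro rfl; simp at heq; omega
        have hpd : p ∣ n + 1 := by
          rw [heq]; exact Dvd.dvd.mul_right (dvd_pow_self p hs) u
        have hmod : n % p = p - 1 := by
          rcases hpd with ⟨c, hc⟩
          have hc1 : 1 ≤ c := by nlinarith
          have h5 : n = p * (c - 1) + (p - 1) := by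
            have : p * c = p * (c - 1) + p := by rw [Nat.mul_sub_one]; omega
            omega
          rw [h5, Nat.mul_add_mod]
          exact Nat.mod_eq_of_lt (by omega)
        refine ⟨hmod, s - 1, u, hu1, hu2, ?_⟩
        have hps : p ^ s = p * p ^ (s - 1) := by
          conv_lhs => rw [show s = 1 + (s - 1) by omega, pow_add, pow_one]
        have h4 : p * (n / p + 1) = p * (p ^ (s - 1) * u) := by
          rw [← succ_eq_of_mod hp2 hmod, heq, hps, mul_assoc]
        exact Nat.eq_of_mul_eq_mul_left (by omega) h4

lemma uniq_aux {p q n s u t v : ℕ} (hp : p.Prime) (hq : q.Prime) (hlt : p < q)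
    (hu2 : u ≤ p) (heq : n + 1 = p ^ s * u) (ht : 1 ≤ t) (hv1 : 1 ≤ v)
    (heq' : n + 1 = q ^ t * v) : False := by
  have hqd : q ^ t ∣ p ^ s * u := by
    rw [← heq, heq']; exact dvd_mul_right _ _
  have hcop : Nat.Coprime (q ^ t) (p ^ s) :=
    Nat.Coprime.pow t s ((Nat.coprime_primes hq hp).mpr (by omega))
  have hdu : q ^ t ∣ u := Nat.Coprime.dvd_of_dvd_mul_left hcop hqd
  have hu0 : 0 < u := by
    rcases Nat.eq_zero_or_pos u with rfl | h
    · simp at heq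
    · exact h
  have h1 : q ^ t ≤ u := Nat.le_of_dvd hu0 hdu
  have h2 : q ≤ q ^ t := Nat.le_self_pow (by omega) q
  exact absurd ((h2.trans h1).trans hu2) (Nat.not_le.mpr hlt)

/-- **Lemma 5.6 (good primes).** A prime `p` is good for `n ≥ 0` if and only if `p > n`, or
`n + 1 = p ^ s * u` for some integers `s ≥ 1` and `2 ≤ u ≤ p`.  Moreover, for a given `n`, at
most one prime `p ≤ n` satisfies the second condition. -/
theorem isGoodPrime_iff (n : ℕ) :
    (∀ p : ℕ, p.Prime →
      (IsGoodPrime p n ↔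
        n < p ∨ ∃ s u : ℕ, 1 ≤ s ∧ 2 ≤ u ∧ u ≤ p ∧ n + 1 = p ^ s * u))
    ∧ (∀ p q : ℕ, p.Prime → q.Prime → p ≤ n → q ≤ n →
        (∃ s u : ℕ, 1 ≤ s ∧ 2 ≤ u ∧ u ≤ p ∧ n + 1 = p ^ s * u) →
        (∃ s u : ℕ, 1 ≤ s ∧ 2 ≤ u ∧ u ≤ q ∧ n + 1 = q ^ s * u) →
        p = q) := by
  constructor
  · intro p hp
    rw [good_iff_aux hp n]
    have hp2 := hp.two_le
    constructor
    · rintro ⟨s, u, hu1, hu2, heq⟩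
      rcases Nat.eq_zero_or_pos s with rfl | hs
      · left; simp at heq; omega
      rcases eq_or_lt_of_le hu1 with rfl | hu
      · rcases Nat.lt_or_ge 1 s with hs2 | hs2
        · right; exact ⟨s - 1, p, by omega, hp2, le_rfl, by
            rw [heq, mul_one, ← pow_succ]; congr 1; omega⟩
        · left
          have hs1 : s = 1 := by omega
          subst hs1; simp at heq; omega
      · right; exact ⟨s, u, hs, by omega, hu2, heq⟩
    · rintro (h | ⟨s, u, hs, hu1, hu2, heq⟩)
      · exact ⟨0, n + 1, by omega, by omega, by ring⟩
      · exact ⟨s, u, by omega, hu2, heq⟩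
  · rintro p q hp hq hpn hqn ⟨s, u, hs, hu1, hu2, heq⟩ ⟨t, v, ht, hv1, hv2, heq'⟩
    rcases lt_trichotomy p q with hlt | heqpq | hlt
    · exact (uniq_aux hp hq hlt hu2 heq ht (by omega) heq').elim
    · exact heqpq
    · exact (uniq_aux hq hp hlt hv2 heq' hs (by omega) heq).elim
end
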